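/- Let p be an odd prime, m an odd positive integer, and q = p^m. The number of pairs (a,b) ∈ GF(q) × GF(q) with a ≠ 0, Tr_{q/p}(b²/(4a)) = 0, Tr_{q/p}(a) ≠ 0, and Tr_{q/p}(b) = 0, equals p^{m−2}(p−1)(p^{m−1}+p−1). -/

import Mathlib

open Finset

section count
variable {A V : Type*} [AddCommGroup A] [AddCommGroup V] [Fintype A] [Fintype V]

private lemma fiber_card_eq [DecidableEq V] (L : A →+ V) {y : V} (hy : ∃ x, L x = y) :
    (univ.filter fun a => L a = y).card = (univ.filter fun a => L a = 0).card := by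
  classical
  obtain ⟨x, hx⟩ := hy
  apply Finset.card_bij (fun a _ => a - x)
  · intro a ha
    simp only [mem_filter, mem_univ, true_and] at ha ⊢
    rw [map_sub, ha, hx, sub_self]
  · intro a _ b _ h
    simpa using h
  · intro b hb
    simp only [mem_filter, mem_univ, true_and] at hb ⊢
    exact ⟨b + x, by rw [map_add, hb, hx, zero_add], by abel⟩

private lemma count_preimage [DecidableEq V] (L : A →+ V) (hL : Function.Surjective L)
    (T : Finset V) :
    (univ.filter fun a => L a ∈ T).card * Fintype.card V = T.card * Fintype.card A := by
  classical
  have key : ∀ S : Finset V, (univ.filter fun a => L a ∈ S).card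
      = S.card * (univ.filter fun a => L a = 0).card := by
    intro S
    rw [Finset.card_eq_sum_card_fiberwise (f := L) (s := univ.filter fun a => L a ∈ S) (t := S)
      (fun a ha => (mem_filter.1 ha).2)]
    rw [Finset.sum_congr rfl (fun y hy => ?_), Finset.sum_const, smul_eq_mul]
    have h1 : ((univ.filter fun a => L a ∈ S).filter fun a => L a = y)
        = univ.filter fun a => L a = y := by
      ext a
      simp only [mem_filter, mem_univ, true_and, and_iff_right_iff_imp]
      intro h; rw [h]; exact hy
    rw [h1, fiber_card_eq L (hL y)]
  have h2 : Fintype.card A = Fintype.card V * (univ.filter fun a => L a = 0).card := by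
    have := key univ
    simpa using this
  rw [key T, h2]
  ring
end count

section field
variable {K F : Type*} [Field K] [Field F] [Algebra K F] [Finite K] [FiniteDimensional K F]

private lemma surj_trace_family {n : ℕ} (v : Fin n → F) (hv : LinearIndependent K v) :
    Function.Surjective (fun a : F => fun i => Algebra.trace K F (a * v i)) := by
  classical
  have hB := traceForm_nondegenerate K F
  have hs := (linearIndepOn_id_range_iff hv.injective).mpr hv
  set b := Module.Basis.extend hs with hbdef
  set D := (Algebra.traceForm K F).dualBasis hB b with hD
  intro w
  have hmem : ∀ i, v i ∈ hs.extend (Set.subset_univ _) := fun i =>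
    hs.subset_extend _ ⟨i, rfl⟩
  refine ⟨∑ i, w i • D ⟨v i, hmem i⟩, funext fun j => ?_⟩
  have expand : Algebra.trace K F ((∑ i, w i • D ⟨v i, hmem i⟩) * v j)
      = ∑ i, w i * (Algebra.traceForm K F (D ⟨v i, hmem i⟩) (v j)) := by
    rw [Finset.sum_mul, map_sum]
    refine Finset.sum_congr rfl fun i _ => ?_
    rw [smul_mul_assoc, map_smul]
    rfl
  have heach : ∀ i, (Algebra.traceForm K F (D ⟨v i, hmem i⟩) (v j))
      = if i = j then 1 else 0 := by
    intro i
    have h := (Algebra.traceForm K F).apply_dualBasis_left hB b ⟨v i, hmem i⟩ ⟨v j, hmem j⟩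
    rw [Module.Basis.extend_apply_self] at h
    rw [h]
    simp only [Subtype.mk.injEq]
    by_cases hij : i = j
    · simp [hij]
    · rw [if_neg, if_neg hij]
      intro hcon
      exact hij (hv.injective hcon.symm)
  simp only [expand, heach, mul_ite, mul_one, mul_zero]
  simp

omit [Finite K] in
private lemma indep_one_t_t2 (hodd : Odd (Module.finrank K F)) {t : F}
    (ht : t ∉ Set.range (algebraMap K F)) : LinearIndependent K ![(1 : F), t, t ^ 2] := by
  rw [Fintype.linearIndependent_iff]
  intro g hg
  have hsum : algebraMap K F (g 0) + algebraMap K F (g 1) * t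
      + algebraMap K F (g 2) * t ^ 2 = 0 := by
    have := hg
    simp only [Fin.sum_univ_three, Matrix.cons_val_zero, Matrix.cons_val_one, Matrix.head_cons,
      Matrix.cons_val_two, Matrix.tail_cons, smul_eq_mul, Algebra.smul_def, mul_one] at this
    linear_combination this
  have hg2 : g 2 = 0 := by
    by_contra h2
    have hint : IsIntegral K t := Algebra.IsIntegral.isIntegral t
    set P : Polynomial K := Polynomial.C (g 0) + Polynomial.C (g 1) * Polynomial.X
      + Polynomial.C (g 2) * Polynomial.X ^ 2 with hP
    have hPne : P ≠ 0 := fun h => by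
      have := congrArg (fun q => Polynomial.coeff q 2) h
      simp [hP, Polynomial.coeff_add, Polynomial.coeff_C, Polynomial.coeff_C_mul] at this
      exact h2 this
    have haeval : Polynomial.aeval t P = 0 := by
      simp [hP, Polynomial.aeval_add, Polynomial.aeval_C]
      linear_combination hsum
    have hdvd := minpoly.dvd K t haeval
    have hdeg2 : (minpoly K t).natDegree ≤ 2 := by
      refine le_trans (Polynomial.natDegree_le_of_dvd hdvd hPne) ?_
      apply Polynomial.natDegree_add_le_of_degree_le
      · apply le_trans (Polynomial.natDegree_add_le _ _)
        simp [Polynomial.natDegree_C_mul_le]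
        exact le_trans (Polynomial.natDegree_C_mul_le _ _) (by simp)
      · exact le_trans (Polynomial.natDegree_C_mul_le _ _) (by simp)
    have hdeg1 : (minpoly K t).natDegree ≠ 1 := by
      intro h
      rw [minpoly.natDegree_eq_one_iff] at h
      exact ht h
    have hpos : 0 < (minpoly K t).natDegree := minpoly.natDegree_pos hint
    have hdd : (minpoly K t).natDegree = 2 := by omega
    have hdvdrank := minpoly.degree_dvd hint
    rw [hdd] at hdvdrank
    rw [Nat.odd_iff] at hodd
    omega
  have hg1 : g 1 = 0 := by
    by_contra h1
    apply ht
    refine ⟨-(g 0) / g 1, ?_⟩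
    have hne : algebraMap K F (g 1) ≠ 0 := fun h =>
      h1 ((algebraMap K F).injective (h.trans (map_zero _).symm))
    rw [map_div₀, map_neg]
    rw [hg2, map_zero] at hsum
    field_simp
    linear_combination -hsum
  have hg0 : g 0 = 0 := by
    rw [hg1, hg2] at hsum
    simpa using hsum
  intro i
  fin_cases i <;> assumption
end field

theorem stmt10 (p m : ℕ) (hp : p.Prime) (hpodd : Odd p) (hm : Odd m) (F : Type*) [Field F]
    [Fintype F] [Algebra (ZMod p) F] (hcard : Fintype.card F = p ^ m) :
    (Set.ncard {ab : F × F | ab.1 ≠ 0 ∧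
        Algebra.trace (ZMod p) F (ab.2 ^ 2 / (4 * ab.1)) = 0 ∧
        Algebra.trace (ZMod p) F ab.1 ≠ 0 ∧
        Algebra.trace (ZMod p) F ab.2 = 0} : ℚ) =
      (p : ℚ) ^ ((m : ℤ) - 2) * ((p : ℚ) - 1) * ((p : ℚ) ^ ((m : ℤ) - 1) + (p : ℚ) - 1) := by
  classical
  haveI : Fact p.Prime := ⟨hp⟩
  haveI : FiniteDimensional (ZMod p) F := Module.Finite.of_finite
  haveI : CharP F p := charP_of_injective_algebraMap (algebraMap (ZMod p) F).injective p
  have hp2 : p ≠ 2 := by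
    rintro rfl
    rw [Nat.odd_iff] at hpodd
    omega
  have hrank : Module.finrank (ZMod p) F = m := by
    have h := Module.card_eq_pow_finrank (K := ZMod p) (V := F)
    rw [ZMod.card, hcard] at h
    exact (Nat.pow_right_injective hp.two_le h.symm)
  set K := ZMod p
  set Tr := Algebra.trace K F with hTr
  -- basic nonzero facts
  have h2F : (2 : F) ≠ 0 := by
    have : ((2 : ℕ) : F) ≠ 0 := by
      rw [Ne, CharP.cast_eq_zero_iff F p]
      intro hdvd
      exact hp2 ((Nat.prime_dvd_prime_iff_eq hp Nat.prime_two).mp hdvd)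
    simpa using this
  have h2K : (2 : K) ≠ 0 := by
    have : ((2 : ℕ) : K) ≠ 0 := by
      rw [Ne, CharP.cast_eq_zero_iff K p]
      intro hdvd
      exact hp2 ((Nat.prime_dvd_prime_iff_eq hp Nat.prime_two).mp hdvd)
    simpa using this
  have h4F : (4 : F) ≠ 0 := by
    have : (4 : F) = 2 * 2 := by norm_num
    rw [this]
    exact mul_ne_zero h2F h2F
  have htr2 : ∀ x : F, Tr ((2 : F) * x) = 2 * Tr x := by
    intro x
    have h2alg : (2 : F) = algebraMap K F 2 := by
      rw [map_ofNat]
    rw [h2alg, ← Algebra.smul_def, map_smul, smul_eq_mul]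
  -- the substitution b = 2 a t
  set Q : F → F → Prop := fun a t => Tr a ≠ 0 ∧ Tr (a * t) = 0 ∧ Tr (a * t ^ 2) = 0 with hQ
  have haQ : ∀ a t, Q a t → a ≠ 0 := by
    rintro a t ⟨h, -⟩ rfl
    exact h (map_zero _)
  have himg : {ab : F × F | ab.1 ≠ 0 ∧ Tr (ab.2 ^ 2 / (4 * ab.1)) = 0 ∧
      Tr ab.1 ≠ 0 ∧ Tr ab.2 = 0}
      = (fun x : F × F => (x.1, 2 * x.1 * x.2)) '' {x : F × F | Q x.1 x.2} := by
    ext ⟨a, b⟩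
    simp only [Set.mem_setOf_eq, Set.mem_image, Prod.mk.injEq, Prod.exists]
    constructor
    · rintro ⟨ha, h1, h2, h3⟩
      refine ⟨a, b / (2 * a), ⟨h2, ?_, ?_⟩, rfl, by field_simp⟩
      · have hb : (2 : F) * (a * (b / (2 * a))) = b := by field_simp
        have := htr2 (a * (b / (2 * a)))
        rw [hb, h3] at this
        exact (mul_eq_zero.mp this.symm).resolve_left h2K
      · have : a * (b / (2 * a)) ^ 2 = b ^ 2 / (4 * a) := by
          field_simp
          ring
        rw [this, h1]
    · rintro ⟨a', t, ⟨hq1, hq2, hq3⟩, rfl, rfl⟩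
      have ha' : a' ≠ 0 := haQ _ _ ⟨hq1, hq2, hq3⟩
      refine ⟨ha', ?_, hq1, ?_⟩
      · have : (2 * a' * t) ^ 2 / (4 * a') = a' * t ^ 2 := by
          field_simp
          ring
        rw [this, hq3]
      · have : 2 * a' * t = (2 : F) * (a' * t) := by ring
        rw [this, htr2, hq2, mul_zero]
  -- injectivity of the substitution
  have hinj : Set.InjOn (fun x : F × F => (x.1, 2 * x.1 * x.2)) {x : F × F | Q x.1 x.2} := by
    rintro ⟨a, t⟩ ha ⟨a', t'⟩ ha' h
    simp only [Prod.mk.injEq] at h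
    obtain ⟨h1, h2⟩ := h
    subst h1
    have hane : a ≠ 0 := haQ _ _ ha
    have : t = t' := by
      have h2a : 2 * a ≠ 0 := mul_ne_zero h2F hane
      exact mul_left_cancel₀ h2a h2
    simp [this]
  set c : F → ℕ := fun t => (univ.filter fun a : F => Q a t).card with hc
  have hN : Set.ncard {ab : F × F | ab.1 ≠ 0 ∧ Tr (ab.2 ^ 2 / (4 * ab.1)) = 0 ∧
      Tr ab.1 ≠ 0 ∧ Tr ab.2 = 0} = ∑ t : F, c t := by
    rw [himg, Set.ncard_image_of_injOn hinj]
    have h1 : {x : F × F | Q x.1 x.2}.ncard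
        = (univ.filter fun x : F × F => Q x.1 x.2).card := by
      simp [Set.ncard_eq_toFinset_card', Set.toFinset_setOf]
    rw [h1]
    rw [Finset.card_eq_sum_card_fiberwise (f := Prod.snd) (t := univ) (fun x _ => mem_univ _)]
    refine Finset.sum_congr rfl fun t _ => ?_
    apply Finset.card_bij' (fun (x : F × F) _ => x.1) (fun (a : F) _ => (a, t))
    · intro x hx
      simp only [mem_filter, mem_univ, true_and] at hx ⊢
      obtain ⟨hq, hsnd⟩ := hx
      rwa [← hsnd]
    · intro a ha
      simp only [mem_filter, mem_univ, true_and] at ha ⊢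
      exact ⟨ha, trivial⟩
    · intro x hx
      simp only [mem_filter, mem_univ, true_and] at hx
      exact Prod.ext rfl hx.2.symm
    · intro a _
      rfl
  -- AddMonoidHom versions of the trace maps
  have mkL : ∀ {n : ℕ} (v : Fin n → F), ∃ L : F →+ (Fin n → K),
      ∀ a : F, L a = fun i => Tr (a * v i) := by
    intro n v
    refine ⟨AddMonoidHom.mk' (fun a => fun i => Tr (a * v i)) ?_, fun a => rfl⟩
    intro x y
    funext i
    simp [add_mul, map_add]
  have hcardpi : ∀ n : ℕ, Fintype.card (Fin n → K) = p ^ n := by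
    intro n
    simp only [Fintype.card_pi, Finset.prod_const, Finset.card_univ, Fintype.card_fin]
    congr 1
    exact ZMod.card p
  -- count of elements of trace zero
  have hB0 : (univ.filter fun a : F => Tr a = 0).card * p = p ^ m := by
    obtain ⟨L, hLdef⟩ := mkL ![1]
    have hsurj : Function.Surjective L := by
      intro w
      obtain ⟨a, ha⟩ := surj_trace_family (K := K) ![(1 : F)]
        (linearIndependent_unique_iff.mpr one_ne_zero) w
      exact ⟨a, by rw [hLdef]; exact ha⟩
    have hcp := count_preimage L hsurj ({0} : Finset (Fin 1 → K))
    have hiff : ∀ a : F, (L a ∈ ({0} : Finset (Fin 1 → K))) ↔ Tr a = 0 := by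
      intro a
      rw [Finset.mem_singleton, hLdef]
      constructor
      · intro h
        have := congrFun h 0
        simpa using this
      · intro h
        funext i
        fin_cases i
        simpa using h
    rw [Finset.filter_congr (fun a _ => hiff a), Finset.card_singleton, one_mul,
      hcardpi 1, pow_one, hcard] at hcp
    exact hcp
  -- the t = 0 count
  have hc0 : c 0 * p + p ^ m = p ^ m * p := by
    have hcongr : c 0 = (univ.filter fun a : F => ¬ Tr a = 0).card := by
      apply Finset.card_nbij id (fun a ha => ?_) (fun a _ b _ h => h) (fun a ha => ?_)
      · simp only [mem_coe, mem_filter, mem_univ, true_and] at ha ⊢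
        exact ha.1
      · simp only [Set.mem_image, mem_coe, mem_filter, mem_univ, true_and] at ha ⊢
        refine ⟨a, ?_, rfl⟩
        refine ⟨ha, ?_, ?_⟩ <;> simp
    have hsplit := Finset.card_filter_add_card_filter_not
      (s := (univ : Finset F)) (p := fun a : F => Tr a = 0)
    rw [Finset.card_univ, hcard] at hsplit
    calc c 0 * p + p ^ m
        = (univ.filter fun a : F => ¬ Tr a = 0).card * p
          + (univ.filter fun a : F => Tr a = 0).card * p := by rw [hcongr, hB0]
      _ = ((univ.filter fun a : F => Tr a = 0).card
          + (univ.filter fun a : F => ¬ Tr a = 0).card) * p := by ring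
      _ = p ^ m * p := by rw [hsplit]
  -- the count for t outside the prime field
  have hct : ∀ t : F, t ∉ Set.range (algebraMap K F) → c t * p ^ 3 = (p - 1) * p ^ m := by
    intro t ht
    obtain ⟨L, hLdef⟩ := mkL ![1, t, t ^ 2]
    have hindep : LinearIndependent K ![(1 : F), t, t ^ 2] :=
      indep_one_t_t2 (hrank ▸ hm) ht
    have hsurj : Function.Surjective L := by
      intro w
      obtain ⟨a, ha⟩ := surj_trace_family (K := K) ![(1 : F), t, t ^ 2] hindep w
      exact ⟨a, by rw [hLdef]; exact ha⟩
    set T3 : Finset (Fin 3 → K) := (univ.erase (0 : K)).image (fun u => ![u, 0, 0]) with hT3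
    have hT3inj : Function.Injective (fun u : K => ![u, 0, 0]) := by
      intro x y h
      simpa using congrFun h 0
    have hT3card : T3.card = p - 1 := by
      rw [hT3, Finset.card_image_of_injective _ hT3inj,
        Finset.card_erase_of_mem (mem_univ _), Finset.card_univ]
      congr 1
      exact ZMod.card p
    have hiff : ∀ a : F, (L a ∈ T3) ↔ Q a t := by
      intro a
      rw [hLdef, hT3]
      simp only [Finset.mem_image, Finset.mem_erase, Finset.mem_univ, and_true]
      constructor
      · rintro ⟨u, hu, hfun⟩
        have e0 := congrFun hfun 0
        have e1 := congrFun hfun 1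
        have e2 := congrFun hfun 2
        simp only [Matrix.cons_val_zero, Matrix.cons_val_one, Matrix.head_cons,
          Matrix.cons_val_two, Matrix.tail_cons, mul_one] at e0 e1 e2
        exact ⟨by rw [← e0]; exact hu, e1.symm, e2.symm⟩
      · rintro ⟨hq1, hq2, hq3⟩
        refine ⟨Tr a, hq1, ?_⟩
        funext i
        fin_cases i <;> simp [hq2, hq3]
    have hcp := count_preimage L hsurj T3
    rw [Finset.filter_congr (fun a _ => hiff a), hT3card, hcardpi 3, hcard] at hcp
    exact hcp
  -- t in the prime field, t ≠ 0 : empty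
  have hczero : ∀ t : F, t ∈ Set.range (algebraMap K F) → t ≠ 0 → c t = 0 := by
    rintro _ ⟨u, rfl⟩ hne
    have hu : u ≠ 0 := fun h => hne (by rw [h, map_zero])
    rw [hc]
    rw [Finset.card_eq_zero, Finset.filter_eq_empty_iff]
    rintro a _ ⟨hq1, hq2, -⟩
    apply hq1
    have hre : a * algebraMap K F u = u • a := by
      rw [Algebra.smul_def]; ring
    rw [hre, map_smul, smul_eq_mul] at hq2
    exact (mul_eq_zero.mp hq2).resolve_left hu
  -- cardinality of the prime field inside F
  have hrangecard : (univ.filter fun t : F => t ∈ Set.range (algebraMap K F)).card = p := by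
    have himg2 : (univ.filter fun t : F => t ∈ Set.range (algebraMap K F))
        = univ.image (algebraMap K F) := by
      ext x
      simp [eq_comm]
    rw [himg2, Finset.card_image_of_injective _ (algebraMap K F).injective, Finset.card_univ]
    exact ZMod.card p
  have hnotrangecard : (univ.filter fun t : F => ¬ t ∈ Set.range (algebraMap K F)).card
      = p ^ m - p := by
    have hsplit := Finset.card_filter_add_card_filter_not
      (s := (univ : Finset F)) (p := fun t : F => t ∈ Set.range (algebraMap K F))
    rw [Finset.card_univ, hcard, hrangecard] at hsplit
    omega
  -- summing up
  have hsumnat : (∑ t : F, c t) * p ^ 3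
      = c 0 * p ^ 3 + (p ^ m - p) * ((p - 1) * p ^ m) := by
    rw [Finset.sum_mul]
    rw [← Finset.sum_filter_add_sum_filter_not univ
      (fun t : F => t ∈ Set.range (algebraMap K F)) (fun t => c t * p ^ 3)]
    congr 1
    · apply Finset.sum_eq_single_of_mem 0
      · simp only [mem_filter, mem_univ, true_and]
        exact ⟨0, map_zero _⟩
      · intro b hb hbne
        rw [hczero b (mem_filter.mp hb).2 hbne, zero_mul]
    · rw [Finset.sum_congr rfl (fun t htmem => hct t (mem_filter.mp htmem).2),
        Finset.sum_const, hnotrangecard, smul_eq_mul]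
  -- final arithmetic
  rw [hN, Nat.cast_sum]
  have hp0 : (p : ℚ) ≠ 0 := Nat.cast_ne_zero.mpr hp.pos.ne'
  have hm0 : m ≠ 0 := by
    rintro rfl
    exact (by norm_num : ¬ Odd 0) hm
  have hple : p ≤ p ^ m := Nat.le_self_pow hm0 p
  have h1p : 1 ≤ p := hp.one_le
  have EQ1 : (∑ x : F, (c x : ℚ)) * (p : ℚ) ^ 3
      = (c 0 : ℚ) * (p : ℚ) ^ 3 + ((p : ℚ) ^ m - p) * (((p : ℚ) - 1) * (p : ℚ) ^ m) := by
    have h := congrArg (fun n : ℕ => (n : ℚ)) hsumnat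
    push_cast [Nat.cast_sub hple, Nat.cast_sub h1p] at h
    linarith [h]
  have EQ2 : (c 0 : ℚ) * p + (p : ℚ) ^ m = (p : ℚ) ^ m * p := by exact_mod_cast hc0
  have hz2 : (p : ℚ) ^ ((m : ℤ) - 2) = (p : ℚ) ^ m / (p : ℚ) ^ 2 := by
    rw [zpow_sub₀ hp0, zpow_natCast,
      show ((2 : ℤ)) = ((2 : ℕ) : ℤ) by norm_num, zpow_natCast]
  have hz1 : (p : ℚ) ^ ((m : ℤ) - 1) = (p : ℚ) ^ m / p := by
    rw [zpow_sub₀ hp0, zpow_natCast]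
    norm_num
  rw [hz2, hz1]
  field_simp
  linear_combination EQ1 + (p : ℚ) ^ 2 * EQ2
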